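/- Let G be a finite group and let P and Q be positions (finite subsets of G) with ⌈P⌉ = ⌈Q⌉ and |P| ≡ |Q| (mod 2). Then nim(P) = nim(Q). -/
import Mathlib


/-- The minimum excludant of a set of natural numbers. -/
noncomputable def mex (S : Set ℕ) : ℕ := sInf {n : ℕ | n ∉ S}

open Classical in
/-- The nim-value of a position in the achievement game GEN(G): a position `P`
is terminal when it generates `G` (so its nim-value is `mex ∅ = 0`); otherwise
its options are the sets `insert g P` for `g ∉ P`. -/
noncomputable def gameNim {G : Type*} [Group G] [Fintype G] (P : Finset G) : ℕ :=
  if Subgroup.closure (P : Set G) = ⊤ then 0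
  else mex {n : ℕ | ∃ g : {g : G // g ∉ P}, gameNim (insert g.1 P) = n}
termination_by Pᶜ.card
decreasing_by
  exact Finset.card_lt_card (by
    constructor
    · intro x hx
      simp only [Finset.mem_compl, Finset.mem_insert] at hx ⊢
      exact fun h => hx (Or.inr h)
    · intro hsub
      have h1 : g.1 ∈ Pᶜ := Finset.mem_compl.mpr g.2
      have h2 : g.1 ∈ (insert g.1 P)ᶜ := hsub h1
      simp at h2)


/-- ⌈P⌉: the intersection of all maximal subgroups of `G` containing `P`
(equal to `G`, i.e. `⊤`, if no maximal subgroup contains `P`). -/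
def ceilSet {G : Type*} [Group G] (P : Set G) : Subgroup G :=
  sInf {M : Subgroup G | IsCoatom M ∧ P ⊆ (M : Set G)}

section Aux

variable {G : Type*} [Group G]

lemma subset_ceilSet (P : Set G) : P ⊆ (ceilSet P : Set G) := by
  intro x hx
  rw [SetLike.mem_coe, ceilSet, Subgroup.mem_sInf]
  exact fun M hM => hM.2 hx

lemma coatom_mem_iff (P : Set G) (M : Subgroup G) (hM : IsCoatom M) :
    P ⊆ (M : Set G) ↔ ceilSet P ≤ M := by
  constructor
  · intro h
    exact sInf_le ⟨hM, h⟩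
  · intro h
    exact (subset_ceilSet P).trans h

lemma ceilSet_insert_congr {P Q : Set G} (h : ceilSet P = ceilSet Q) (g : G) :
    ceilSet (insert g P) = ceilSet (insert g Q) := by
  unfold ceilSet
  congr 1
  ext M
  simp only [Set.mem_setOf_eq, Set.insert_subset_iff]
  constructor
  · rintro ⟨hM, hg, hP⟩
    refine ⟨hM, hg, (coatom_mem_iff Q M hM).2 ?_⟩
    rw [← h]
    exact (coatom_mem_iff P M hM).1 hP
  · rintro ⟨hM, hg, hQ⟩
    refine ⟨hM, hg, (coatom_mem_iff P M hM).2 ?_⟩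
    rw [h]
    exact (coatom_mem_iff Q M hM).1 hQ

lemma ceilSet_insert_self {P : Set G} {g : G} (hg : g ∈ ceilSet P) :
    ceilSet (insert g P) = ceilSet P := by
  unfold ceilSet
  congr 1
  ext M
  simp only [Set.mem_setOf_eq, Set.insert_subset_iff]
  constructor
  · rintro ⟨hM, _, hP⟩
    exact ⟨hM, hP⟩
  · rintro ⟨hM, hP⟩
    exact ⟨hM, (coatom_mem_iff P M hM).1 hP hg, hP⟩

lemma ceilSet_eq_top_iff [Fintype G] (P : Set G) :
    ceilSet P = ⊤ ↔ Subgroup.closure P = ⊤ := by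
  constructor
  · intro h
    by_contra hc
    obtain ⟨M, hM, hle⟩ := (eq_top_or_exists_le_coatom (Subgroup.closure P)).resolve_left hc
    have h1 : ceilSet P ≤ M := sInf_le ⟨hM, (Subgroup.subset_closure).trans hle⟩
    rw [h] at h1
    exact hM.1 (top_le_iff.1 h1)
  · intro h
    have : {M : Subgroup G | IsCoatom M ∧ P ⊆ (M : Set G)} = ∅ := by
      ext M
      simp only [Set.mem_setOf_eq, Set.mem_empty_iff_false, iff_false, not_and]
      intro hM hPM
      have : Subgroup.closure P ≤ M := (Subgroup.closure_le M).2 hPM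
      rw [h] at this
      exact hM.1 (top_le_iff.1 this)
    rw [ceilSet, this, sInf_empty]

lemma mex_not_mem {S : Set ℕ} (hS : {n | n ∉ S}.Nonempty) : mex S ∉ S :=
  Nat.sInf_mem (s := {n | n ∉ S}) hS

lemma mex_eq_of_subset {A B : Set ℕ} (hA : {n | n ∉ A}.Nonempty) (hAB : A ⊆ B)
    (h : ∀ x ∈ B, x ∈ A ∨ x ≠ mex A) : mex B = mex A := by
  have hmA : mex A ∉ A := mex_not_mem hA
  have hmB : mex A ∉ B := by
    intro hx
    rcases h _ hx with h1 | h2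
    · exact hmA h1
    · exact h2 rfl
  have h1 : mex B ≤ mex A := Nat.sInf_le (s := {n | n ∉ B}) (m := mex A) hmB
  have h2 : mex B ∉ B := mex_not_mem ⟨mex A, hmB⟩
  have h3 : mex B ∉ A := fun hx => h2 (hAB hx)
  exact le_antisymm h1 (Nat.sInf_le (s := {n | n ∉ A}) (m := mex B) h3)

open Classical in
lemma optCompl_nonempty [Fintype G] (P : Finset G) :
    {m : ℕ | m ∉ {n : ℕ | ∃ g : {g : G // g ∉ P}, gameNim (insert g.1 P) = n}}.Nonempty := by
  have hfin : {n : ℕ | ∃ g : {g : G // g ∉ P}, gameNim (insert g.1 P) = n}.Finite :=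
    Set.finite_range (fun g : {g : G // g ∉ P} => gameNim (insert g.1 P))
  exact (Set.Finite.infinite_compl hfin).nonempty

open Classical in
lemma gameNim_eq_mex [Fintype G] (P : Finset G) (h : Subgroup.closure (P : Set G) ≠ ⊤) :
    gameNim P = mex {n : ℕ | ∃ g : {g : G // g ∉ P}, gameNim (insert g.1 P) = n} := by
  rw [gameNim, if_neg h]

end Aux

/-- Structure equivalent positions of the same parity have equal nim-values. -/
theorem nim_eq_of_structure_equiv {G : Type*} [Group G] [Fintype G]
    (P Q : Finset G) (hceil : ceilSet (P : Set G) = ceilSet (Q : Set G))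
    (hpty : P.card % 2 = Q.card % 2) :
    gameNim P = gameNim Q := by
  classical
  suffices H : ∀ n (P Q : Finset G), Pᶜ.card + Qᶜ.card = n →
      ceilSet (P : Set G) = ceilSet (Q : Set G) → P.card % 2 = Q.card % 2 →
      gameNim P = gameNim Q from H (Pᶜ.card + Qᶜ.card) P Q rfl hceil hpty
  intro n
  induction n using Nat.strong_induction_on with
  | _ n IH =>
  intro P Q hn hceil hpty
  by_cases htop : Subgroup.closure ((P : Finset G) : Set G) = ⊤
  · have htopQ : Subgroup.closure ((Q : Finset G) : Set G) = ⊤ :=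
      (ceilSet_eq_top_iff _).1 (hceil.symm.trans ((ceilSet_eq_top_iff _).2 htop))
    rw [gameNim, if_pos htop, gameNim, if_pos htopQ]
  · have htopQ : Subgroup.closure ((Q : Finset G) : Set G) ≠ ⊤ := fun h =>
      htop ((ceilSet_eq_top_iff _).1 (hceil.trans ((ceilSet_eq_top_iff _).2 h)))
    -- positions are contained in their ceiling
    have hPT : ∀ x ∈ P, x ∈ ceilSet ((P : Finset G) : Set G) := fun x hx =>
      subset_ceilSet _ (Finset.mem_coe.2 hx)
    have hQT : ∀ x ∈ Q, x ∈ ceilSet ((P : Finset G) : Set G) := fun x hx => by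
      rw [hceil]; exact subset_ceilSet _ (Finset.mem_coe.2 hx)
    -- the key inclusion between option sets
    have inc : ∀ P' Q' : Finset G, P'ᶜ.card + Q'ᶜ.card = n →
        ceilSet ((P' : Finset G) : Set G) = ceilSet ((Q' : Finset G) : Set G) →
        P'.card % 2 = Q'.card % 2 →
        (∃ b : G, b ∈ ceilSet ((Q' : Finset G) : Set G) ∧ b ∉ Q') →
        {m : ℕ | ∃ g : {g : G // g ∉ P'}, gameNim (insert g.1 P') = m} ⊆
          {m : ℕ | ∃ g : {g : G // g ∉ Q'}, gameNim (insert g.1 Q') = m} := by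
      rintro P' Q' hn' hceil' hpty' ⟨b, hbT, hbQ⟩ x ⟨⟨g, hg⟩, rfl⟩
      have hgc : g ∈ P'ᶜ := Finset.mem_compl.2 hg
      have hbc : b ∈ Q'ᶜ := Finset.mem_compl.2 hbQ
      have hc1 : (insert g P')ᶜ.card = P'ᶜ.card - 1 := by
        rw [Finset.compl_insert, Finset.card_erase_of_mem hgc]
      have hc2 : (insert b Q')ᶜ.card = Q'ᶜ.card - 1 := by
        rw [Finset.compl_insert, Finset.card_erase_of_mem hbc]
      have hp1 : 1 ≤ P'ᶜ.card := Finset.card_pos.2 ⟨g, hgc⟩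
      have hq1 : 1 ≤ Q'ᶜ.card := Finset.card_pos.2 ⟨b, hbc⟩
      have hcard1 : (insert g P').card = P'.card + 1 := Finset.card_insert_of_notMem hg
      by_cases hgT : g ∈ ceilSet ((P' : Finset G) : Set G)
      · refine ⟨⟨b, hbQ⟩, ?_⟩
        refine (IH ((insert g P')ᶜ.card + (insert b Q')ᶜ.card) (by omega)
          (insert g P') (insert b Q') rfl ?_ ?_).symm
        · rw [Finset.coe_insert, Finset.coe_insert, ceilSet_insert_self hgT,
            ceilSet_insert_self hbT, hceil']
        · rw [hcard1, Finset.card_insert_of_notMem hbQ]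
          omega
      · have hgQ : g ∉ Q' := by
          intro hgQ'
          exact hgT (by rw [hceil']; exact subset_ceilSet _ (Finset.mem_coe.2 hgQ'))
        refine ⟨⟨g, hgQ⟩, ?_⟩
        refine (IH ((insert g P')ᶜ.card + (insert g Q')ᶜ.card)
          (by
            have : (insert g Q')ᶜ.card = Q'ᶜ.card - 1 := by
              rw [Finset.compl_insert, Finset.card_erase_of_mem (Finset.mem_compl.2 hgQ)]
            omega)
          (insert g P') (insert g Q') rfl ?_ ?_).symm
        · rw [Finset.coe_insert, Finset.coe_insert]
          exact ceilSet_insert_congr hceil' g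
        · rw [hcard1, Finset.card_insert_of_notMem hgQ]
          omega
    -- the key asymmetric case: ceiling contained in P', but not in Q'
    have key : ∀ P' Q' : Finset G, P'ᶜ.card + Q'ᶜ.card = n →
        ceilSet ((P' : Finset G) : Set G) = ceilSet ((Q' : Finset G) : Set G) →
        P'.card % 2 = Q'.card % 2 →
        Subgroup.closure ((P' : Finset G) : Set G) ≠ ⊤ →
        (∀ t : G, t ∈ ceilSet ((P' : Finset G) : Set G) → t ∈ P') →
        (∃ b : G, b ∈ ceilSet ((Q' : Finset G) : Set G) ∧ b ∉ Q') →
        gameNim P' = gameNim Q' := by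
      rintro P' Q' hn' hceil' hpty' htop' hTP' hbex
      have htopQ' : Subgroup.closure ((Q' : Finset G) : Set G) ≠ ⊤ := fun h =>
        htop' ((ceilSet_eq_top_iff _).1 (hceil'.trans ((ceilSet_eq_top_iff _).2 h)))
      rw [gameNim_eq_mex P' htop', gameNim_eq_mex Q' htopQ']
      refine (mex_eq_of_subset (optCompl_nonempty P') (inc P' Q' hn' hceil' hpty' hbex) ?_).symm
      rintro x ⟨⟨g, hgQ⟩, rfl⟩
      by_cases hgT : g ∈ ceilSet ((Q' : Finset G) : Set G)
      · -- extra option inside the ceiling: its value differs from mex of P'-options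
        right
        have hgT' : g ∈ ceilSet ((P' : Finset G) : Set G) := by rw [hceil']; exact hgT
        have hQsubP : ∀ x ∈ Q', x ∈ P' := fun x hx =>
          hTP' x (by rw [hceil']; exact subset_ceilSet _ (Finset.mem_coe.2 hx))
        have hRsubP : insert g Q' ⊆ P' := by
          intro y hy
          rcases Finset.mem_insert.1 hy with h | h
          · subst h; exact hTP' y hgT'
          · exact hQsubP y h
        have hRcard : (insert g Q').card = Q'.card + 1 := Finset.card_insert_of_notMem hgQ
        have hRne : insert g Q' ≠ P' := by
          intro h
          have := congrArg Finset.card h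
          omega
        obtain ⟨c, hcP, hcR⟩ := Finset.exists_of_ssubset (lt_of_le_of_ne hRsubP hRne)
        have hcT : c ∈ ceilSet ((Q' : Finset G) : Set G) := by
          rw [← hceil']; exact subset_ceilSet _ (Finset.mem_coe.2 hcP)
        -- gameNim (insert c (insert g Q')) = gameNim P'
        have hgc : g ∈ Q'ᶜ := Finset.mem_compl.2 hgQ
        have hcc : c ∈ (insert g Q')ᶜ := Finset.mem_compl.2 hcR
        have hm1 : (insert g Q')ᶜ.card = Q'ᶜ.card - 1 := by
          rw [Finset.compl_insert, Finset.card_erase_of_mem hgc]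
        have hm2 : (insert c (insert g Q'))ᶜ.card = (insert g Q')ᶜ.card - 1 := by
          rw [Finset.compl_insert, Finset.card_erase_of_mem hcc]
        have hq1 : 1 ≤ Q'ᶜ.card := Finset.card_pos.2 ⟨g, hgc⟩
        have hq2 : 1 ≤ (insert g Q')ᶜ.card := Finset.card_pos.2 ⟨c, hcc⟩
        have hkey : gameNim (insert c (insert g Q')) = gameNim P' := by
          refine IH ((insert c (insert g Q'))ᶜ.card + P'ᶜ.card) (by omega)
            (insert c (insert g Q')) P' rfl ?_ ?_
          · have h1 : ceilSet (insert g (↑Q' : Set G)) = ceilSet ((Q' : Finset G) : Set G) :=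
              ceilSet_insert_self hgT
            have hcT2 : c ∈ ceilSet (insert g (↑Q' : Set G)) := by rw [h1]; exact hcT
            rw [Finset.coe_insert, Finset.coe_insert, ceilSet_insert_self hcT2, h1, ← hceil']
          · rw [Finset.card_insert_of_notMem hcR, hRcard]
            omega
        -- insert g Q' is not terminal
        have hRnt : Subgroup.closure ((insert g Q' : Finset G) : Set G) ≠ ⊤ := by
          intro h
          apply htop'
          have hle : Subgroup.closure ((insert g Q' : Finset G) : Set G) ≤
              Subgroup.closure ((P' : Finset G) : Set G) :=
            Subgroup.closure_mono (by exact_mod_cast hRsubP)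
          rw [h] at hle
          rw [eq_top_iff]
          exact hle
        rw [gameNim_eq_mex _ hRnt]
        intro heq
        have hmem : gameNim P' ∈
            {m : ℕ | ∃ g' : {g' : G // g' ∉ insert g Q'}, gameNim (insert g'.1 (insert g Q')) = m} :=
          ⟨⟨c, hcR⟩, hkey⟩
        rw [← gameNim_eq_mex P' htop'] at heq
        rw [← heq] at hmem
        exact mex_not_mem (optCompl_nonempty (insert g Q')) hmem
      · -- option outside the ceiling: matched by the same move from P'
        left
        have hgP : g ∉ P' := fun h => hgT (by rw [← hceil']; exact subset_ceilSet _ (Finset.mem_coe.2 h))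
        refine ⟨⟨g, hgP⟩, ?_⟩
        have hgc : g ∈ P'ᶜ := Finset.mem_compl.2 hgP
        have hgc' : g ∈ Q'ᶜ := Finset.mem_compl.2 hgQ
        have h1 : (insert g P')ᶜ.card = P'ᶜ.card - 1 := by
          rw [Finset.compl_insert, Finset.card_erase_of_mem hgc]
        have h2 : (insert g Q')ᶜ.card = Q'ᶜ.card - 1 := by
          rw [Finset.compl_insert, Finset.card_erase_of_mem hgc']
        have hp1 : 1 ≤ P'ᶜ.card := Finset.card_pos.2 ⟨g, hgc⟩
        refine IH ((insert g P')ᶜ.card + (insert g Q')ᶜ.card) (by omega)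
          (insert g P') (insert g Q') rfl ?_ ?_
        · rw [Finset.coe_insert, Finset.coe_insert]
          exact ceilSet_insert_congr hceil' g
        · rw [Finset.card_insert_of_notMem hgP, Finset.card_insert_of_notMem hgQ]
          omega
    -- now finish by cases
    by_cases hTP : ∀ t : G, t ∈ ceilSet ((P : Finset G) : Set G) → t ∈ P
    · by_cases hTQ : ∀ t : G, t ∈ ceilSet ((Q : Finset G) : Set G) → t ∈ Q
      · have : P = Q := by
          ext x
          constructor
          · intro hx
            exact hTQ x (by rw [← hceil]; exact subset_ceilSet _ (Finset.mem_coe.2 hx))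
          · intro hx
            exact hTP x (by rw [hceil]; exact subset_ceilSet _ (Finset.mem_coe.2 hx))
        rw [this]
      · push_neg at hTQ
        obtain ⟨b, hbT, hbQ⟩ := hTQ
        exact key P Q hn hceil hpty htop hTP ⟨b, hbT, hbQ⟩
    · push_neg at hTP
      obtain ⟨a, haT, haP⟩ := hTP
      by_cases hTQ : ∀ t : G, t ∈ ceilSet ((Q : Finset G) : Set G) → t ∈ Q
      · exact (key Q P (by omega) hceil.symm hpty.symm htopQ hTQ
          ⟨a, haT, haP⟩).symm
      · push_neg at hTQ
        obtain ⟨b, hbT, hbQ⟩ := hTQ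
        rw [gameNim_eq_mex P htop, gameNim_eq_mex Q htopQ]
        congr 1
        apply Set.Subset.antisymm
        · exact inc P Q hn hceil hpty ⟨b, hbT, hbQ⟩
        · exact inc Q P (by omega) hceil.symm hpty.symm ⟨a, haT, haP⟩
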